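/- Let L be a traceless real 2×2 matrix such that U ↦ U^T [[0,1],[-1,0]] L U is positive definite. Then there exist unique k > 0 and τ in the upper half-plane (Im τ > 0) such that L = [[k·Re(τ)/Im(τ), -k/Im(τ)], [k·|τ|²/Im(τ), -k·Re(τ)/Im(τ)]]. Explicitly, writing L = [[a,b],[c,-a]], one has k = sqrt(-bc - a²), Re τ = -a/b, Im τ = -k/b. -/

import Mathlib

open Matrix

theorem stmt_2 (a b c : ℝ) (L : Matrix (Fin 2) (Fin 2) ℝ)
    (hL : L = !![a, b; c, -a])
    (h : ∀ U : Fin 2 → ℝ, U ≠ 0 →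
      0 < U ⬝ᵥ ((!![0, 1; -1, 0] * L).mulVec U)) :
    (∃! p : ℝ × ℂ, 0 < p.1 ∧ 0 < p.2.im ∧
      L = !![p.1 * p.2.re / p.2.im, -p.1 / p.2.im;
             p.1 * Complex.normSq p.2 / p.2.im, -p.1 * p.2.re / p.2.im]) ∧
    (0 < Real.sqrt (-(b * c) - a ^ 2) ∧
      0 < (-Real.sqrt (-(b * c) - a ^ 2) / b) ∧
      L = !![Real.sqrt (-(b * c) - a ^ 2) * (-a / b) / (-Real.sqrt (-(b * c) - a ^ 2) / b),
             -Real.sqrt (-(b * c) - a ^ 2) / (-Real.sqrt (-(b * c) - a ^ 2) / b);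
             Real.sqrt (-(b * c) - a ^ 2) * ((-a / b) ^ 2 + (-Real.sqrt (-(b * c) - a ^ 2) / b) ^ 2) / (-Real.sqrt (-(b * c) - a ^ 2) / b),
             -Real.sqrt (-(b * c) - a ^ 2) * (-a / b) / (-Real.sqrt (-(b * c) - a ^ 2) / b)]) := by
  subst hL
  have h1 := h ![1,0] (by intro hh; have := congrFun hh 0; simp at this)
  have h2 := h ![0,1] (by intro hh; have := congrFun hh 1; simp at this)
  simp [Matrix.mulVec, dotProduct, Fin.sum_univ_two, Matrix.mul_apply] at h1 h2
  have hb : b < 0 := by linarith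
  have h3 := h ![b,-a] (by intro hh; have := congrFun hh 0; simp at this; exact hb.ne this)
  simp [Matrix.mulVec, dotProduct, Fin.sum_univ_two, Matrix.mul_apply] at h3
  have hd : 0 < -(b*c) - a^2 := by nlinarith [h3]
  clear h h1 h2 h3
  set k := Real.sqrt (-(b*c) - a^2) with hkdef
  have hk : 0 < k := Real.sqrt_pos.2 hd
  have hk2 : k^2 = -(b*c) - a^2 := Real.sq_sqrt hd.le
  have him : 0 < -k/b := div_pos_of_neg_of_neg (by linarith) hb
  have hbne : b ≠ 0 := hb.ne
  have hkne : k ≠ 0 := hk.ne'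
  have e1 : k * (-a/b) / (-k/b) = a := by field_simp
  have e2 : -k / (-k/b) = b := by field_simp
  have e3 : k * ((-a/b)^2 + (-k/b)^2) / (-k/b) = c := by
    rw [div_eq_iff (ne_of_gt him)]
    field_simp
    linear_combination hk2
  have e4 : -k * (-a/b) / (-k/b) = -a := by rw [neg_mul, neg_div, e1]
  have hmat : !![a, b; c, -a] =
      !![k * (-a/b) / (-k/b), -k / (-k/b);
         k * ((-a/b)^2 + (-k/b)^2) / (-k/b), -k * (-a/b) / (-k/b)] := by
    rw [e1, e2, e3, e4]
  have hmatC : !![a, b; c, -a] =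
      !![k * (-a/b) / (-k/b), -k / (-k/b);
         k * Complex.normSq ⟨-a/b, -k/b⟩ / (-k/b), -k * (-a/b) / (-k/b)] := by
    rw [Complex.normSq_mk, ← pow_two, ← pow_two]; exact hmat
  constructor
  · refine ⟨(k, ⟨-a/b, -k/b⟩), ⟨hk, him, hmatC⟩, ?_⟩
    rintro ⟨q, τ⟩ ⟨hq, hτ, heq⟩
    have e00 := congrFun (congrFun heq 0) 0
    have e01 := congrFun (congrFun heq 0) 1
    have e10 := congrFun (congrFun heq 1) 0
    simp at e00 e01 e10
    rw [Complex.normSq_apply] at e10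
    have hτim : τ.im ≠ 0 := hτ.ne'
    have hq1 : q = -b * τ.im := by
      field_simp at e01; linarith
    have hre : τ.re = -a/b := by
      rw [hq1] at e00
      field_simp at e00 ⊢
      apply mul_left_cancel₀ hτim
      linear_combination τ.im * e00
    rw [hre] at e10
    have him2 : τ.im = -k/b := by
      have h6 : b^2 * τ.im^2 = k^2 := by
        have hne : b*τ.im ≠ 0 := mul_ne_zero hbne hτim
        rw [hq1] at e10
        field_simp at e10
        apply mul_left_cancel₀ hne
        linear_combination (b*τ.im)*(e10 - hk2)
      have h4 : (τ.im - (-k/b)) * (τ.im + (-k/b)) = 0 := by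
        field_simp
        nlinarith [h6]
      rcases mul_eq_zero.1 h4 with h5 | h5
      · linarith
      · exfalso; nlinarith [hτ, him]
    have hqk : q = k := by rw [hq1, him2]; field_simp
    exact Prod.ext hqk (Complex.ext hre him2)
  · exact ⟨hk, him, hmat⟩
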